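/- Let R be a one-dimensional commutative Noetherian ring with a unique minimal prime ideal p, and suppose every maximal ideal of R is principal and generated by a regular element. Then p = 0, i.e., R is a domain. -/

import Mathlib

/-- Let `R` be a one-dimensional commutative Noetherian ring with a unique minimal
prime `p`, and suppose every maximal ideal of `R` is principal and generated by a
regular element. Then `p = 0`. -/
theorem stmt10 {R : Type*} [CommRing R] [IsNoetherianRing R]
    (hdim : ringKrullDim R = 1)
    (p : Ideal R) (hp : minimalPrimes R = {p})
    (hmax : ∀ m : Ideal R, m.IsMaximal →
      ∃ z ∈ nonZeroDivisors R, m = Ideal.span {z}) :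
    p = ⊥ := by
  have hpmem : p ∈ minimalPrimes R := by rw [hp]; rfl
  have hpprime : p.IsPrime := hpmem.1.1
  -- every prime contains p
  have hle : ∀ q : Ideal R, q.IsPrime → p ≤ q := by
    intro q hq
    obtain ⟨p', hp', hle⟩ := Ideal.exists_minimalPrimes_le (I := ⊥) (J := q) bot_le
    rw [minimalPrimes] at hp
    rw [show (⊥ : Ideal R).minimalPrimes = {p | IsMinimalPrime p} from rfl, hp,
      Set.mem_singleton_iff] at hp'
    exact hp' ▸ hle
  -- p is not maximal
  have hpnotmax : ¬ p.IsMaximal := by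
    intro hpm
    have : Subsingleton (PrimeSpectrum R) := by
      constructor
      rintro ⟨q, hq⟩ ⟨q', hq'⟩
      have h1 : q = p := ((hpm.eq_of_le hq.ne_top (hle q hq)).symm)
      have h2 : q' = p := ((hpm.eq_of_le hq'.ne_top (hle q' hq')).symm)
      simp [PrimeSpectrum.ext_iff, h1, h2]
    have := Order.krullDim_nonpos_of_subsingleton (α := PrimeSpectrum R)
    rw [ringKrullDim] at hdim
    rw [hdim] at this
    norm_num at this
  -- key: p ≤ m • p for all maximal m
  have key : ∀ m : Ideal R, m.IsMaximal → p ≤ m • p := by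
    intro m hm
    obtain ⟨z, hz, rfl⟩ := hmax m hm
    have hzp : z ∉ p := by
      intro hzp
      have : Ideal.span {z} ≤ p := (Ideal.span_singleton_le_iff_mem p).mpr hzp
      exact hpnotmax (le_antisymm (hle _ hm.isPrime) this ▸ hm)
    intro x hx
    obtain ⟨y, rfl⟩ := Ideal.mem_span_singleton'.mp (hle _ hm.isPrime hx)
    have hyp : y ∈ p := by
      rcases hpprime.mem_or_mem hx with h | h
      · exact h
      · exact absurd h hzp
    rw [Ideal.smul_eq_mul]
    have := Ideal.mul_mem_mul (Ideal.mem_span_singleton_self z) hyp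
    rwa [mul_comm z y] at this
  -- Nakayama at each maximal ideal
  have ann : ∀ m : Ideal R, m.IsMaximal →
      ¬ ((p : Submodule R R).annihilator ≤ m) := by
    intro m hm hle'
    obtain ⟨r, hr1, hr2⟩ := Submodule.exists_sub_one_mem_and_smul_eq_zero_of_fg_of_le_smul m p
      (IsNoetherian.noetherian p) (key m hm)
    have hr : r ∈ (p : Submodule R R).annihilator := Submodule.mem_annihilator.mpr hr2
    have : (1 : R) ∈ m := by
      have := m.sub_mem (hle' hr) hr1
      simpa using this
    exact hm.ne_top ((Ideal.eq_top_iff_one m).mpr this)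
  have hannt : (p : Submodule R R).annihilator = ⊤ := by
    by_contra h
    obtain ⟨m, hm, hle'⟩ := Ideal.exists_le_maximal _ h
    exact ann m hm hle'
  ext x
  simp only [Ideal.mem_bot]
  constructor
  · intro hx
    have h1 : (1 : R) ∈ (p : Submodule R R).annihilator := hannt ▸ Submodule.mem_top
    simpa using Submodule.mem_annihilator.mp h1 x hx
  · rintro rfl; exact p.zero_mem
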